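/- Let μ, k > 0, s, β ∈ ℝ, α ≤ 0, and ξ ∈ ℝ. Then every complex root λ of the dispersion relation λ² + ξ(μξ − i(s + β))λ + ξ²(−α + k²ξ²/2 − s(β + iμξ)) = 0 satisfies Re λ ≤ 0. Moreover, if ξ ≠ 0, then every such root satisfies Re λ < 0. -/
import Mathlib


/-- stability of the essential spectrum for subsonic or sonic states
(`α ≤ 0`): every root `λ` of the dispersion relation
`λ² + ξ(μξ − i(s+β))λ + ξ²(−α + k²ξ²/2 − s(β + iμξ)) = 0`
satisfies `Re λ ≤ 0`, with strict inequality when `ξ ≠ 0`. -/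
theorem stmt_14 (μ k s β α ξ : ℝ) (hμ : 0 < μ) (hk : 0 < k) (hα : α ≤ 0) :
    ∀ lam : ℂ,
      lam ^ 2
        + (ξ : ℂ) * (((μ * ξ : ℝ) : ℂ) - Complex.I * ((s + β : ℝ) : ℂ)) * lam
        + ((ξ : ℂ)) ^ 2 *
            (((-α + k ^ 2 * ξ ^ 2 / 2 - s * β : ℝ) : ℂ) - Complex.I * ((s * μ * ξ : ℝ) : ℂ))
        = 0 →
      lam.re ≤ 0 ∧ (ξ ≠ 0 → lam.re < 0) := by
  intro lam heq
  have h1 := congrArg Complex.re heq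
  have h2 := congrArg Complex.im heq
  simp [Complex.mul_re, Complex.mul_im, pow_two] at h1 h2
  set x := lam.re with hxdef
  set y := lam.im with hydef
  -- shifted variables: t = y - ξ s, a = μ ξ², m = ξ(s-β), d = ξ²(-α + k²ξ⁴/2)
  have h1' : x^2 - (y - ξ*s)^2 + μ*ξ^2*x - ξ*(s-β)*(y-ξ*s)
      + ξ^2*(-α + k^2*ξ^2/2) = 0 := by linear_combination h1
  have h2' : (y - ξ*s)*(2*x + μ*ξ^2) + ξ*(s-β)*x = 0 := by linear_combination h2
  have key : (x^2 + μ*ξ^2*x + ξ^2*(-α + k^2*ξ^2/2))*(2*x+μ*ξ^2)^2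
      + (ξ*(s-β))^2 * x * (x + μ*ξ^2) = 0 := by
    linear_combination (2*x+μ*ξ^2)^2 * h1'
      + ((y-ξ*s)*(2*x+μ*ξ^2) - ξ*(s-β)*x + ξ*(s-β)*(2*x+μ*ξ^2)) * h2'
  have ha : 0 ≤ μ*ξ^2 := by positivity
  have hna : 0 ≤ -α := by linarith
  have hd : 0 ≤ ξ^2*(-α + k^2*ξ^2/2) := by positivity
  have hxle : x ≤ 0 := by
    by_contra hxp
    push_neg at hxp
    have hE : (0:ℝ) < 2*x + μ*ξ^2 := by linarith
    have hq : (0:ℝ) < x^2 + μ*ξ^2*x + ξ^2*(-α + k^2*ξ^2/2) := by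
      nlinarith [mul_nonneg ha hxp.le]
    have hT1 : (0:ℝ) < (x^2 + μ*ξ^2*x + ξ^2*(-α + k^2*ξ^2/2))*(2*x+μ*ξ^2)^2 :=
      mul_pos hq (pow_pos hE 2)
    have hT2 : (0:ℝ) ≤ (ξ*(s-β))^2 * x * (x + μ*ξ^2) :=
      mul_nonneg (mul_nonneg (sq_nonneg _) hxp.le) (by linarith)
    linarith [key]
  refine ⟨hxle, fun hξ => ?_⟩
  rcases lt_or_eq_of_le hxle with h | h
  · exact h
  · exfalso
    have hxz : x = 0 := h
    rw [hxz] at h1' h2'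
    have ha' : 0 < μ*ξ^2 := by positivity
    have hd' : 0 < ξ^2*(k^2*ξ^2/2) := by positivity
    have hmul : (y - ξ*s) * (μ*ξ^2) = 0 := by linear_combination h2'
    have ht : y - ξ*s = 0 := by
      rcases mul_eq_zero.mp hmul with h' | h'
      · exact h'
      · exact absurd h' ha'.ne'
    rw [ht] at h1'
    nlinarith [h1']
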